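/- The graph of any medium is bipartite (equivalently, every circuit in it is even). -/

import Mathlib

variable {S : Type*}

/-- Result of applying message `m` (a list of tokens) to state `P`. -/
def mApply (m : List (S → S)) (P : S) : S := m.foldl (fun s τ => τ s) P

/-- `τ'` is a reverse of `τ`. -/
def IsReverse (τ τ' : S → S) : Prop := ∀ P Q : S, P ≠ Q → (τ P = Q ↔ τ' Q = P)

/-- `(S, T)` is a token system. -/
def IsTokenSystem (T : Set (S → S)) : Prop :=
  Nontrivial S ∧ T.Nonempty ∧ ∀ τ ∈ T, τ ≠ id

/-- `m` is a message of the token system with token set `T`. -/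
def IsMsg (T : Set (S → S)) (m : List (S → S)) : Prop := ∀ τ ∈ m, τ ∈ T

/-- `m` is stepwise effective for `P`. -/
def StepwiseEff : List (S → S) → S → Prop
  | [], _ => True
  | τ :: rest, P => τ P ≠ P ∧ StepwiseEff rest (τ P)

/-- `m` is consistent: it contains no token together with a reverse of it. -/
def Consistent (m : List (S → S)) : Prop :=
  ∀ τ ∈ m, ∀ τ' ∈ m, ¬ IsReverse τ τ'

/-- `m` is concise for `P`. -/
def Concise (T : Set (S → S)) (m : List (S → S)) (P : S) : Prop :=
  IsMsg T m ∧ Consistent m ∧ StepwiseEff m P ∧ m.Nodup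

/-- `m` is a return message for `P`. -/
def IsReturn (m : List (S → S)) (P : S) : Prop :=
  StepwiseEff m P ∧ mApply m P = P

/-- `m` is vacuous: its indices partition into pairs of mutually reverse tokens. -/
def Vacuous (m : List (S → S)) : Prop :=
  ∃ σ : Equiv.Perm (Fin m.length),
    (∀ i, σ i ≠ i) ∧ (∀ i, σ (σ i) = i) ∧
    ∀ i, IsReverse (m.get i) (m.get (σ i))

/-- `(S, T)` is a medium: token system satisfying [Ma] and [Mb]. -/
def IsMedium (T : Set (S → S)) : Prop :=
  IsTokenSystem T ∧
  (∀ P Q : S, P ≠ Q → ∃ m, Concise T m P ∧ mApply m P = Q) ∧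
  (∀ (m : List (S → S)) (P : S), IsMsg T m → IsReturn m P → Vacuous m)

/-- Content of a message: its set of tokens. -/
def msgContent (m : List (S → S)) : Set (S → S) := {τ | τ ∈ m}

/-- Token content of a state `P`. -/
def SContent (T : Set (S → S)) (P : S) : Set (S → S) :=
  {τ | ∃ (V : S) (m : List (S → S)), Concise T m V ∧ mApply m V = P ∧ τ ∈ m}

/-- `mr` is the reverse message `τ̃ₙ…τ̃₁` of `m = τ₁…τₙ`. -/
def IsReverseOfMsg (m mr : List (S → S)) : Prop :=
  List.Forall₂ (fun τ τ' => IsReverse τ τ' ∧ IsReverse τ' τ) m mr.reverse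

/-- The graph of a medium: states are vertices, token-adjacent states are joined. -/
def mediumGraph (T : Set (S → S)) : SimpleGraph S where
  Adj P Q := P ≠ Q ∧ ∃ τ ∈ T, τ P = Q ∨ τ Q = P
  symm := by
    constructor
    rintro P Q ⟨h, τ, hτ, hor⟩
    exact ⟨h.symm, τ, hτ, hor.symm⟩
  loopless := by
    constructor
    rintro P ⟨h, -⟩
    exact h rfl

variable {V : Type*}

/-- The like relation on arcs of a graph:
`ab L cd` iff `d(a,c) + 1 = d(b,d) + 1 = d(a,d) = d(b,c)`. -/
def Like (G : SimpleGraph V) (a b c d : V) : Prop :=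
  G.Adj a b ∧ G.Adj c d ∧
    G.dist a c + 1 = G.dist b d + 1 ∧ G.dist b d + 1 = G.dist a d ∧
    G.dist a d = G.dist b c

/-- A graph is mediatic if it is connected, bipartite, and its like relation is transitive. -/
def IsMediatic (G : SimpleGraph V) : Prop :=
  G.Connected ∧ G.Colorable 2 ∧
    ∀ a b c d e f : V, Like G a b c d → Like G c d e f → Like G a b e f


section Aux

lemma mApply_append (m m' : List (S → S)) (P : S) :
    mApply (m ++ m') P = mApply m' (mApply m P) := by
  simp [mApply, List.foldl_append]

lemma stepwiseEff_append {m m' : List (S → S)} {P : S}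
    (h : StepwiseEff m P) (h' : StepwiseEff m' (mApply m P)) :
    StepwiseEff (m ++ m') P := by
  induction m generalizing P with
  | nil => simpa [mApply] using h'
  | cons τ rest ih =>
    obtain ⟨h1, h2⟩ := h
    exact ⟨h1, ih h2 h'⟩

lemma vacuous_even {m : List (S → S)} (h : Vacuous m) : Even m.length := by
  obtain ⟨σ, hfix, hinv, -⟩ := h
  have hsum : ∑ _i : Fin m.length, (1 : ZMod 2) = 0 := by
    apply Finset.sum_ninvolution (fun i => σ i)
    · intro a; decide
    · intro a ha; exact hfix a
    · intro a; exact Finset.mem_univ _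
    · intro a; exact hinv a
  have hcast : ((m.length : ℕ) : ZMod 2) = 0 := by
    simpa using hsum
  have := (ZMod.natCast_eq_zero_iff m.length 2).mp hcast
  exact even_iff_two_dvd.mpr this

lemma exists_reverse {T : Set (S → S)} (hM : IsMedium T) {τ : S → S} (hτ : τ ∈ T) :
    ∃ τ' ∈ T, IsReverse τ τ' := by
  obtain ⟨⟨hnt, hne, hid⟩, hMa, hMb⟩ := hM
  have hτid : τ ≠ id := hid τ hτ
  have : ∃ P : S, τ P ≠ P := by
    by_contra hc
    push_neg at hc
    exact hτid (funext fun P => hc P)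
  obtain ⟨P, hP⟩ := this
  obtain ⟨m, ⟨hmsg, -, hse, -⟩, happ⟩ := hMa (τ P) P hP
  have hret : IsReturn (τ :: m) P := by
    constructor
    · exact ⟨hP, hse⟩
    · show mApply m (τ P) = P
      exact happ
  have hmsg' : IsMsg T (τ :: m) := by
    intro υ hυ
    rcases List.mem_cons.mp hυ with h | h
    · exact h ▸ hτ
    · exact hmsg υ h
  obtain ⟨σ, hfix, hinv, hrev⟩ := hMb (τ :: m) P hmsg' hret
  have hlen : 0 < (τ :: m).length := by simp
  set i0 : Fin (τ :: m).length := ⟨0, hlen⟩ with hi0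
  refine ⟨(τ :: m).get (σ i0), ?_, ?_⟩
  · exact hmsg' _ (List.get_mem _ _)
  · have := hrev i0
    simpa [hi0] using this

lemma exists_reverse_msg {T : Set (S → S)} (hM : IsMedium T) :
    ∀ (m : List (S → S)) (P : S), IsMsg T m → StepwiseEff m P →
    ∃ mr, IsMsg T mr ∧ StepwiseEff mr (mApply m P) ∧
      mApply mr (mApply m P) = P ∧ mr.length = m.length := by
  intro m
  induction m with
  | nil =>
    intro P _ _
    exact ⟨[], fun τ h => absurd h List.not_mem_nil, trivial, rfl, rfl⟩
  | cons τ rest ih =>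
    intro P hmsg hse
    obtain ⟨hne, hrest⟩ := hse
    obtain ⟨τ', hτ'T, hrev⟩ := exists_reverse hM (hmsg τ List.mem_cons_self)
    obtain ⟨mr', hmr'msg, hmr'se, hmr'app, hmr'len⟩ :=
      ih (τ P) (fun υ h => hmsg υ (List.mem_cons_of_mem τ h)) hrest
    have hEP : mApply (τ :: rest) P = mApply rest (τ P) := rfl
    have hτ'τP : τ' (τ P) = P := (hrev P (τ P) (Ne.symm hne)).mp rfl
    refine ⟨mr' ++ [τ'], ?_, ?_, ?_, ?_⟩
    · intro υ hυ
      rcases List.mem_append.mp hυ with h | h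
      · exact hmr'msg υ h
      · simp at h; exact h ▸ hτ'T
    · rw [hEP]
      apply stepwiseEff_append hmr'se
      rw [hmr'app]
      exact ⟨by rw [hτ'τP]; exact Ne.symm hne, trivial⟩
    · rw [hEP, mApply_append, hmr'app]
      show τ' (τ P) = P
      exact hτ'τP
    · simp [hmr'len]

end Aux

/-- The graph of any medium is bipartite (2-colorable). -/
theorem stmt14 {T : Set (S → S)} (hM : IsMedium T) :
    (mediumGraph T).Colorable 2 := by
  classical
  obtain ⟨O, O', hOO'⟩ := hM.1.1
  have hpath : ∀ P : S, ∃ m, IsMsg T m ∧ StepwiseEff m O ∧ mApply m O = P := by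
    intro P
    by_cases h : O = P
    · exact ⟨[], fun τ ht => absurd ht List.not_mem_nil, trivial, h⟩
    · obtain ⟨m, ⟨hmsg, -, hse, -⟩, happ⟩ := hM.2.1 O P h
      exact ⟨m, hmsg, hse, happ⟩
  choose f hf1 hf2 hf3 using hpath
  set c : S → ZMod 2 := fun P => ((f P).length : ZMod 2) with hc
  have hparity : ∀ (P : S) (m : List (S → S)), IsMsg T m → StepwiseEff m O →
      mApply m O = P → ((m.length : ZMod 2) = c P) := by
    intro P m hmsg hse happ
    obtain ⟨mr, hmrmsg, hmrse, hmrapp, hmrlen⟩ :=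
      exists_reverse_msg hM (f P) O (hf1 P) (hf2 P)
    rw [hf3 P] at hmrse hmrapp
    have hretse : StepwiseEff (m ++ mr) O := by
      apply stepwiseEff_append hse
      rw [happ]; exact hmrse
    have hretapp : mApply (m ++ mr) O = O := by
      rw [mApply_append, happ, hmrapp]
    have hretmsg : IsMsg T (m ++ mr) := by
      intro υ hυ
      rcases List.mem_append.mp hυ with h | h
      · exact hmsg υ h
      · exact hmrmsg υ h
    have hvac := hM.2.2 (m ++ mr) O hretmsg ⟨hretse, hretapp⟩
    have heven : Even (m.length + (f P).length) := by
      have := vacuous_even hvac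
      simpa [hmrlen] using this
    obtain ⟨k, hk⟩ := heven
    have : ((m.length : ZMod 2)) + ((f P).length : ZMod 2) = 0 := by
      have : ((m.length + (f P).length : ℕ) : ZMod 2) = ((k + k : ℕ) : ZMod 2) := by
        rw [hk]
      push_cast at this
      rw [this]
      exact CharTwo.add_self_eq_zero _
    have h2 : (m.length : ZMod 2) = -((f P).length : ZMod 2) :=
      eq_neg_of_add_eq_zero_left this
    rw [h2, CharTwo.neg_eq]
  have valid : ∀ {P Q : S}, (mediumGraph T).Adj P Q → c P ≠ c Q := by
    intro P Q hadj
    obtain ⟨hPQ, τ, hτT, hor⟩ := hadj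
    have hstep : ∃ υ ∈ T, υ P = Q := by
      rcases hor with h | h
      · exact ⟨τ, hτT, h⟩
      · obtain ⟨τ', hτ'T, hrev⟩ := exists_reverse hM hτT
        exact ⟨τ', hτ'T, (hrev Q P (Ne.symm hPQ)).mp h⟩
    obtain ⟨υ, hυT, hυPQ⟩ := hstep
    have hmsg : IsMsg T (f P ++ [υ]) := by
      intro τ₀ hτ₀
      rcases List.mem_append.mp hτ₀ with h | h
      · exact hf1 P τ₀ h
      · simp at h; exact h ▸ hυT
    have hse : StepwiseEff (f P ++ [υ]) O := by
      apply stepwiseEff_append (hf2 P)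
      rw [hf3 P]
      exact ⟨by rw [hυPQ]; exact Ne.symm hPQ, trivial⟩
    have happ : mApply (f P ++ [υ]) O = Q := by
      rw [mApply_append, hf3 P]
      show υ P = Q
      exact hυPQ
    have hQ := hparity Q (f P ++ [υ]) hmsg hse happ
    simp only [List.length_append, List.length_singleton] at hQ
    push_cast at hQ
    intro h
    rw [hc] at h
    simp only at h
    rw [h] at hQ
    have h1 : (1 : ZMod 2) = 0 := by
      have := hQ
      rw [hc] at this
      simp only at this
      exact (left_eq_add.mp this.symm)
    exact one_ne_zero h1
  have coloring : (mediumGraph T).Coloring (ZMod 2) :=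
    SimpleGraph.Coloring.mk c fun hadj => valid hadj
  have := coloring.colorable
  simpa [ZMod.card] using this
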